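/- Let (G, Σ, χ, w) be a Decoder Retrieval instance and let {a,b} be a one-sided letter pair such that w[a,b] equals a^x b^y or b^y a^x for some integers x, y ≥ 1 (that is, w[a,b] contains only one a-run and only one b-run). Then the instance has no solution. -/

import Mathlib

/-- The letter graph `G(D, w)` on vertex set `Fin w.length`: positions `i < j`
are adjacent iff the ordered pair of letters `(w_i, w_j)` lies in the decoder `D`. -/
def letterGraph {A : Type*} (D : Set (A × A)) (w : List A) : SimpleGraph (Fin w.length) where
  Adj i j := (i < j ∧ (w.get i, w.get j) ∈ D) ∨ (j < i ∧ (w.get j, w.get i) ∈ D)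
  symm := by constructor; intro i j h; exact h.symm
  loopless := by constructor; intro i h; rcases h with ⟨h, -⟩ | ⟨h, -⟩ <;> exact lt_irrefl _ h

/-- `D` is a solution for the decoder-retrieval data `(G, χ, w)`: there is a graph
isomorphism from `G` to the letter graph `G(D, w)` that respects the coloring `χ`. -/
def IsSolution {V A : Type*} (G : SimpleGraph V) (χ : V → A) (w : List A)
    (D : Set (A × A)) : Prop :=
  ∃ f : G ≃g letterGraph D w, ∀ v : V, χ v = w.get (f v)

/-- The color class `V_a` as a finset. -/
def classFinset {V A : Type*} [Fintype V] [DecidableEq A] (χ : V → A) (a : A) : Finset V :=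
  Finset.univ.filter fun v => χ v = a

/-- The number of edges of `G` between `V_a` and `V_b` (for `a ≠ b`),
counted as ordered pairs `(u, v)` with `u ∈ V_a`, `v ∈ V_b`, `u ~ v`. -/
def crossCard {V A : Type*} [Fintype V] [DecidableEq A] (G : SimpleGraph V)
    [DecidableRel G.Adj] (χ : V → A) (a b : A) : ℕ :=
  ((classFinset χ a ×ˢ classFinset χ b).filter fun p => G.Adj p.1 p.2).card

/-- The letter pair `{a, b}` is one-sided: `a ≠ b` and `0 < |E(V_a, V_b)| < |V_a| · |V_b|`. -/
def OneSided {V A : Type*} [Fintype V] [DecidableEq A] (G : SimpleGraph V)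
    [DecidableRel G.Adj] (χ : V → A) (a b : A) : Prop :=
  a ≠ b ∧ 0 < crossCard G χ a b ∧
    crossCard G χ a b < (classFinset χ a).card * (classFinset χ b).card

/-- `w[a, b]`: the maximal subsequence of `w` consisting of occurrences of `a` and `b`. -/
def pairWord {A : Type*} [DecidableEq A] (a b : A) (w : List A) : List A :=
  w.filter fun c => c = a ∨ c = b


private lemma pair_sublist {A : Type*} (w : List A) {i j : Fin w.length} (h : i < j) :
    List.Sublist [w.get i, w.get j] w := by
  have hj' : (j : ℕ) - (↑i + 1) < (w.drop (↑i + 1)).length := by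
    simp [List.length_drop]; omega
  have hmem : w.get j ∈ w.drop (↑i + 1) := by
    have h3 : (w.drop (↑i + 1))[(j : ℕ) - (↑i + 1)]'hj' ∈ w.drop (↑i + 1) :=
      List.getElem_mem _
    have h4 : (w.drop (↑i + 1))[(j : ℕ) - (↑i + 1)]'hj' = w.get j := by
      rw [List.getElem_drop, List.get_eq_getElem]
      congr 1
      omega
    rwa [h4] at h3
  have h1 : List.Sublist [w.get i, w.get j] (w.get i :: w.drop (↑i + 1)) :=
    List.Sublist.cons₂ _ (List.singleton_sublist.mpr hmem)
  have h2 : w.drop (↑i : ℕ) = w.get i :: w.drop (↑i + 1) := by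
    rw [List.get_eq_getElem]; exact List.drop_eq_getElem_cons i.isLt
  exact h1.trans (h2 ▸ List.drop_sublist _ _)

private lemma order_lemma {A : Type*} [DecidableEq A] {a b : A} (hab : a ≠ b) {w : List A}
    {x y : ℕ} (hw : pairWord a b w = List.replicate x a ++ List.replicate y b)
    {i j : Fin w.length} (hi : w.get i = a) (hj : w.get j = b) : i < j := by
  by_contra hlt
  push_neg at hlt
  have hne : j ≠ i := fun h => hab (by rw [← hi, ← hj, h])
  have hji : j < i := lt_of_le_of_ne hlt hne
  have hs : List.Sublist [b, a] w := by
    have := pair_sublist w hji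
    rwa [hi, hj] at this
  have hs2 : List.Sublist [b, a] (pairWord a b w) := by
    have := hs.filter (fun c => decide (c = a ∨ c = b))
    simpa [pairWord] using this
  rw [hw] at hs2
  obtain ⟨l₁, l₂, heq, hl₁, hl₂⟩ := List.sublist_append_iff.mp hs2
  obtain ⟨k, -, rfl⟩ := List.sublist_replicate_iff.mp hl₁
  obtain ⟨m, -, rfl⟩ := List.sublist_replicate_iff.mp hl₂
  cases k with
  | zero =>
    simp only [List.replicate_zero, List.nil_append] at heq
    have : a ∈ List.replicate m b := by rw [← heq]; simp
    exact hab (List.eq_of_mem_replicate this)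
  | succ k =>
    rw [List.replicate_succ, List.cons_append] at heq
    simp only [List.cons.injEq] at heq
    exact hab heq.1.symm

private lemma crossCard_comm {V A : Type*} [Fintype V] [DecidableEq A] (G : SimpleGraph V)
    [DecidableRel G.Adj] (χ : V → A) (a b : A) :
    crossCard G χ a b = crossCard G χ b a := by
  unfold crossCard
  apply Finset.card_bij' (fun p _ => (p.2, p.1)) (fun p _ => (p.2, p.1)) <;>
    simp only [Finset.mem_filter, Finset.mem_product, and_imp, Prod.forall] <;>
    intro u v hu hv hadj <;> simp_all [G.adj_comm]

private lemma main_case {V A : Type*} [Fintype V] [DecidableEq A]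
    (G : SimpleGraph V) [DecidableRel G.Adj] (χ : V → A) (w : List A)
    {a b : A} (hab : a ≠ b)
    (h1 : 0 < crossCard G χ a b)
    (h2 : crossCard G χ a b < (classFinset χ a).card * (classFinset χ b).card)
    {x y : ℕ} (hw : pairWord a b w = List.replicate x a ++ List.replicate y b)
    (D : Set (A × A)) : ¬ IsSolution G χ w D := by
  rintro ⟨f, hf⟩
  have key : ∀ u v : V, χ u = a → χ v = b → (G.Adj u v ↔ (a, b) ∈ D) := by
    intro u v hu hv
    have hwu : w.get (f u) = a := (hf u ▸ hu : χ u = a) ▸ (hf u).symm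
    have hwv : w.get (f v) = b := (hf v ▸ hv : χ v = b) ▸ (hf v).symm
    have hord : f u < f v := order_lemma hab hw hwu hwv
    rw [← f.map_adj_iff]
    show ((f u < f v ∧ _) ∨ (f v < f u ∧ _)) ↔ _
    rw [hwu, hwv]
    constructor
    · rintro (⟨-, h⟩ | ⟨h, -⟩)
      · exact h
      · exact absurd hord (not_lt.mpr h.le)
    · intro h; exact Or.inl ⟨hord, h⟩
  by_cases hD : (a, b) ∈ D
  · have hfull : ((classFinset χ a ×ˢ classFinset χ b).filter fun p => G.Adj p.1 p.2)
        = classFinset χ a ×ˢ classFinset χ b := by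
      apply Finset.filter_true_of_mem
      rintro ⟨u, v⟩ hp
      rw [Finset.mem_product] at hp
      simp only [classFinset, Finset.mem_filter] at hp
      exact (key u v hp.1.2 hp.2.2).mpr hD
    have : crossCard G χ a b = (classFinset χ a).card * (classFinset χ b).card := by
      rw [crossCard, hfull, Finset.card_product]
    omega
  · rw [crossCard, Finset.card_pos] at h1
    obtain ⟨⟨u, v⟩, hp⟩ := h1
    rw [Finset.mem_filter, Finset.mem_product] at hp
    simp only [classFinset, Finset.mem_filter] at hp
    exact hD ((key u v hp.1.1.2 hp.1.2.2).mp hp.2)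

/-- If `{a, b}` is a one-sided letter pair and `w[a, b]` equals `a^x b^y` or
`b^y a^x` for some `x, y ≥ 1` (i.e. it has only one `a`-run and one `b`-run),
then the Decoder Retrieval instance has no solution. -/
theorem no_solution_of_oneSided_single_runs {V A : Type*} [Fintype V] [Fintype A] [DecidableEq A]
    (G : SimpleGraph V) [DecidableRel G.Adj] (χ : V → A) (w : List A)
    (hcls : ∀ b : A, ∃ v : V, χ v = b)
    (hlen : w.length = Fintype.card V)
    (hcount : ∀ b : A, w.count b = (Finset.univ.filter fun v => χ v = b).card)
    (a b : A) (hos : OneSided G χ a b)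
    (hform : ∃ x y : ℕ, 1 ≤ x ∧ 1 ≤ y ∧
      (pairWord a b w = List.replicate x a ++ List.replicate y b ∨
        pairWord a b w = List.replicate y b ++ List.replicate x a)) :
    ∀ D : Set (A × A), ¬ IsSolution G χ w D := by
  obtain ⟨hab, h1, h2⟩ := hos
  obtain ⟨x, y, -, -, hw | hw⟩ := hform
  · exact fun D => main_case G χ w hab h1 h2 hw D
  · intro D
    have hw' : pairWord b a w = List.replicate y b ++ List.replicate x a := by
      rw [← hw, pairWord, pairWord]
      exact List.filter_congr (fun c _ => by simp [or_comm])
    have h1' : 0 < crossCard G χ b a := crossCard_comm G χ a b ▸ h1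
    have h2' : crossCard G χ b a < (classFinset χ b).card * (classFinset χ a).card := by
      rw [← crossCard_comm G χ a b, mul_comm]; exact h2
    exact main_case G χ w hab.symm h1' h2' hw' D
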